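/- For the paperfolding word, for every n ≥ 1 the abelian complexity satisfies ρ(n+1) = ρ(n) + 1 or ρ(n+1) = ρ(n) − 1. -/

import Mathlib

/-- letter of the ordinary paperfolding word at position `m` (positions start at 1):
writing `m = k * 2^j` with `k` odd, the letter is `0` if `k ≡ 1 (mod 4)` and `1` otherwise. -/
def pf (m : ℕ) : ℕ := if (m / 2 ^ (padicValNat 2 m)) % 4 = 1 then 0 else 1

/-- the length-`n` factor of `w` starting at position `i`. -/
def factorAt (w : ℕ → ℕ) (i n : ℕ) : List ℕ := (List.range n).map (fun j => w (i + j))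

/-- `u` is a factor of the 1-indexed infinite word `w`. -/
def IsFactor (w : ℕ → ℕ) (u : List ℕ) : Prop := ∃ i ≥ 1, u = factorAt w i u.length

/-- abelian complexity: number of Parikh vectors of length-`n` factors of `w`. -/
noncomputable def rho (w : ℕ → ℕ) (n : ℕ) : ℕ :=
  {p : ℕ × ℕ | ∃ u : List ℕ, IsFactor w u ∧ u.length = n ∧
    p = (u.count 0, u.count 1)}.ncard

namespace PFAux

lemma pf_le_one (m : ℕ) : pf m ≤ 1 := by unfold pf; split <;> simp

lemma pf_eq_pow_mul (j q : ℕ) (hq : q % 2 = 1) :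
    pf (2 ^ j * q) = if q % 4 = 1 then 0 else 1 := by
  have hq0 : q ≠ 0 := by omega
  have hnd : ¬ (2 ∣ q) := by omega
  have hval : padicValNat 2 (2 ^ j * q) = j := by
    rw [padicValNat.mul (by positivity) hq0, padicValNat.prime_pow,
      padicValNat.eq_zero_of_not_dvd hnd]
    omega
  unfold pf
  rw [hval, Nat.mul_div_cancel_left _ (by positivity : 0 < 2 ^ j)]

/-- the key reflection identity for the paperfolding word. -/
lemma pf_reflect {k p : ℕ} (hp : 0 < p) (hpk : p < 2 ^ k) :
    pf p + pf (2 ^ (k + 1) - p) = 1 := by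
  obtain ⟨j, q, hodd, rfl⟩ := Nat.exists_eq_two_pow_mul_odd hp.ne'
  have hq2 : q % 2 = 1 := Nat.odd_iff.mp hodd
  have hq0 : 0 < q := by omega
  have hjk : j < k := by
    by_contra h
    have : 2 ^ k ≤ 2 ^ j := Nat.pow_le_pow_right (by norm_num) (by omega)
    nlinarith [this, hq0]
  -- write 2^(k+1) - 2^j * q = 2^j * (4 * 2^(k-1-j) - q)
  have hk1 : k + 1 - j = (k - 1 - j) + 2 := by omega
  set s := 2 ^ (k - 1 - j) with hs
  have hpow : 2 ^ (k + 1) = 2 ^ j * (4 * s) := by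
    have h4s : 4 * s = 2 ^ (k + 1 - j) := by rw [hs, hk1, pow_add]; ring
    rw [h4s, ← pow_add]
    congr 1
    omega
  have hqlt : q < 4 * s := by
    have h2 : (2:ℕ) ^ k = 2 ^ j * (2 * s) := by
      have h2s : 2 * s = 2 ^ (k - j) := by
        rw [hs, show k - j = (k - 1 - j) + 1 by omega, pow_succ]; ring
      rw [h2s, ← pow_add]
      congr 1
      omega
    have h1 : 2 ^ j * q < 2 ^ j * (2 * s) := by rw [← h2]; exact hpk
    have h3 : q < 2 * s := Nat.lt_of_mul_lt_mul_left h1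
    omega
  have hsub : 2 ^ (k + 1) - 2 ^ j * q = 2 ^ j * (4 * s - q) := by
    rw [hpow, Nat.mul_sub]
  set q' := 4 * s - q with hq'
  have hq'2 : q' % 2 = 1 := by omega
  rw [hsub, pf_eq_pow_mul j q hq2, pf_eq_pow_mul j q' hq'2]
  have h4 : q % 4 = 1 ∨ q % 4 = 3 := by omega
  rcases h4 with h | h
  · have : q' % 4 = 3 := by omega
    simp [h, this]
  · have : q' % 4 = 1 := by omega
    simp [h, this]

/-- number of ones in the window of length `n` starting at `i`. -/
def cnt (i n : ℕ) : ℕ := ∑ j ∈ Finset.range n, pf (i + j)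

lemma cnt_le (i n : ℕ) : cnt i n ≤ n := by
  calc cnt i n ≤ ∑ _j ∈ Finset.range n, 1 := Finset.sum_le_sum fun j _ => pf_le_one _
  _ = n := by simp

lemma cnt_succ (i n : ℕ) : cnt i (n + 1) = cnt i n + pf (i + n) := Finset.sum_range_succ _ n

lemma cnt_shift (i n : ℕ) : cnt i n + pf (i + n) = cnt (i + 1) n + pf i := by
  have h1 : cnt i (n + 1) = cnt (i + 1) n + pf i := by
    unfold cnt
    rw [Finset.sum_range_succ' (fun j => pf (i + j)) n]
    simp only [Nat.add_zero]
    congr 1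
    apply Finset.sum_congr rfl
    intro j _
    congr 1
    omega
  rw [← cnt_succ, h1]

lemma factorAt_counts (i n : ℕ) :
    (factorAt pf i n).count 1 = cnt i n ∧
      (factorAt pf i n).count 0 = n - cnt i n ∧ cnt i n ≤ n := by
  induction n with
  | zero => simp [factorAt, cnt]
  | succ n ih =>
    have hsplit : factorAt pf i (n + 1) = factorAt pf i n ++ [pf (i + n)] := by
      unfold factorAt
      rw [List.range_succ, List.map_append]
      rfl
    obtain ⟨h1, h0, hle⟩ := ih
    have hc := cnt_succ i n
    have hpf := pf_le_one (i + n)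
    rw [hsplit]
    rcases Nat.le_one_iff_eq_zero_or_eq_one.mp hpf with h | h <;>
      simp [List.count_append, h1, h0, hc, h] <;> omega

/-- the set of window one-counts (windows start at positions `≥ 1`). -/
def V (n : ℕ) : Set ℕ := {v | ∃ i : ℕ, v = cnt (i + 1) n}

lemma V_nonempty (n : ℕ) : (V n).Nonempty := ⟨cnt 1 n, 0, rfl⟩

lemma V_bdd (n : ℕ) : ∀ v ∈ V n, v ≤ n := by
  rintro v ⟨i, rfl⟩; exact cnt_le _ _

noncomputable def bb (n : ℕ) : ℕ := sSup (V n)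
noncomputable def aa (n : ℕ) : ℕ := sInf (V n)

lemma bb_mem (n : ℕ) : bb n ∈ V n :=
  Nat.sSup_mem (V_nonempty n) ⟨n, fun _ h => V_bdd n _ h⟩

lemma aa_mem (n : ℕ) : aa n ∈ V n := Nat.sInf_mem (V_nonempty n)

lemma le_bb {n v : ℕ} (h : v ∈ V n) : v ≤ bb n :=
  le_csSup ⟨n, fun _ h => V_bdd n _ h⟩ h

lemma aa_le {n v : ℕ} (h : v ∈ V n) : aa n ≤ v := Nat.sInf_le h

lemma aa_le_bb (n : ℕ) : aa n ≤ bb n := aa_le (bb_mem n)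

/-- discrete intermediate value theorem, ascending form. -/
lemma ivt_up (f : ℕ → ℕ) (hf : ∀ i, f (i + 1) ≤ f i + 1) (v : ℕ) :
    ∀ d i, f i ≤ v → v ≤ f (i + d) → ∃ m, f m = v := by
  intro d
  induction d with
  | zero => intro i h1 h2; exact ⟨i, le_antisymm h1 (by simpa using h2)⟩
  | succ d ih =>
    intro i h1 h2
    by_cases h : f (i + 1) ≤ v
    · exact ih (i + 1) h (by rw [show i + 1 + d = i + (d + 1) by omega]; exact h2)
    · exact ⟨i, by have := hf i; omega⟩

/-- discrete intermediate value theorem, descending form. -/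
lemma ivt_down (f : ℕ → ℕ) (hf : ∀ i, f i ≤ f (i + 1) + 1) (v : ℕ) :
    ∀ d i, v ≤ f i → f (i + d) ≤ v → ∃ m, f m = v := by
  intro d
  induction d with
  | zero => intro i h1 h2; exact ⟨i, le_antisymm (by simpa using h2) h1⟩
  | succ d ih =>
    intro i h1 h2
    by_cases h : v ≤ f (i + 1)
    · exact ih (i + 1) h (by rw [show i + 1 + d = i + (d + 1) by omega]; exact h2)
    · exact ⟨i, by have := hf i; omega⟩

lemma V_eq_Icc (n : ℕ) : V n = Set.Icc (aa n) (bb n) := by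
  apply Set.Subset.antisymm
  · intro v hv; exact ⟨aa_le hv, le_bb hv⟩
  · rintro v ⟨hav, hvb⟩
    set f : ℕ → ℕ := fun i => cnt (i + 1) n with hfdef
    have hstep : ∀ i, f (i + 1) ≤ f i + 1 ∧ f i ≤ f (i + 1) + 1 := by
      intro i
      have h := cnt_shift (i + 1) n
      have h1 := pf_le_one (i + 1)
      have h2 := pf_le_one (i + 1 + n)
      constructor <;> simp only [hfdef] <;> omega
    obtain ⟨ia, hia⟩ := aa_mem n
    obtain ⟨ib, hib⟩ := bb_mem n
    rcases le_or_gt ia ib with hle | hlt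
    · obtain ⟨m, hm⟩ := ivt_up f (fun i => (hstep i).1) v (ib - ia) ia
        (by rw [hfdef]; simp only [← hia]; exact hav)
        (by rw [hfdef]; simp only [show ia + (ib - ia) = ib by omega, ← hib]; exact hvb)
      exact ⟨m, hm.symm⟩
    · obtain ⟨m, hm⟩ := ivt_down f (fun i => (hstep i).2) v (ia - ib) ib
        (by rw [hfdef]; simp only [← hib]; exact hvb)
        (by rw [hfdef]; simp only [show ib + (ia - ib) = ia by omega, ← hia]; exact hav)
      exact ⟨m, hm.symm⟩

/-- symmetry: the complement count `n - v` is also attained. -/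
lemma V_sym {n v : ℕ} (hv : v ∈ V n) : (n - v) ∈ V n := by
  obtain ⟨i, rfl⟩ := hv
  set i₀ := i + 1 with hi0
  -- choose k with i₀ + n ≤ 2 ^ k
  set k := i₀ + n with hk
  have hklt : i₀ + n < 2 ^ k := Nat.lt_two_pow_self
  rcases Nat.eq_zero_or_pos n with rfl | hn
  · exact ⟨0, by simp [cnt]⟩
  set i' := 2 ^ (k + 1) - (i₀ + n - 1) with hi'
  have hpow_big : i₀ + n - 1 < 2 ^ k := by omega
  have h2k : 2 ^ k < 2 ^ (k + 1) := by
    rw [pow_succ]; have : 0 < 2 ^ k := by positivity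
    omega
  have hi'pos : 1 ≤ i' := by omega
  have hpair : ∀ j, j < n → pf (i' + j) + pf (i₀ + (n - 1 - j)) = 1 := by
    intro j hj
    set p := i₀ + (n - 1 - j) with hp
    have hp0 : 0 < p := by omega
    have hpk : p < 2 ^ k := by omega
    have hrepr : i' + j = 2 ^ (k + 1) - p := by omega
    rw [hrepr, Nat.add_comm]
    exact pf_reflect hp0 hpk
  have hsum : cnt i' n + cnt i₀ n = n := by
    have hrefl : ∑ j ∈ Finset.range n, pf (i₀ + (n - 1 - j)) = cnt i₀ n := by
      unfold cnt
      exact Finset.sum_range_reflect (fun j => pf (i₀ + j)) n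
    calc cnt i' n + cnt i₀ n
        = ∑ j ∈ Finset.range n, pf (i' + j) +
            ∑ j ∈ Finset.range n, pf (i₀ + (n - 1 - j)) := by rw [hrefl]; rfl
      _ = ∑ j ∈ Finset.range n, (pf (i' + j) + pf (i₀ + (n - 1 - j))) := by
            rw [Finset.sum_add_distrib]
      _ = ∑ _j ∈ Finset.range n, 1 := Finset.sum_congr rfl fun j hj =>
            hpair j (Finset.mem_range.mp hj)
      _ = n := by simp
  refine ⟨i' - 1, ?_⟩
  have : i' - 1 + 1 = i' := by omega
  rw [this]
  have := cnt_le i₀ n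
  omega

lemma aa_add_bb (n : ℕ) : aa n + bb n = n := by
  have h1 : n - bb n ∈ V n := V_sym (bb_mem n)
  have h2 : n - aa n ∈ V n := V_sym (aa_mem n)
  have h3 := aa_le h1
  have h4 := le_bb h2
  have h5 := V_bdd n _ (aa_mem n)
  have h6 := V_bdd n _ (bb_mem n)
  omega

lemma bb_step (n : ℕ) : bb n ≤ bb (n + 1) ∧ bb (n + 1) ≤ bb n + 1 := by
  constructor
  · obtain ⟨i, hi⟩ := bb_mem n
    have hmem : cnt (i + 1) (n + 1) ∈ V (n + 1) := ⟨i, rfl⟩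
    have := le_bb hmem
    have := cnt_succ (i + 1) n
    omega
  · obtain ⟨i, hi⟩ := bb_mem (n + 1)
    have hmem : cnt (i + 1) n ∈ V n := ⟨i, rfl⟩
    have := le_bb hmem
    have := cnt_succ (i + 1) n
    have := pf_le_one (i + 1 + n)
    omega

lemma rho_eq (n : ℕ) : rho pf n = bb n + 1 - aa n := by
  have hset : {p : ℕ × ℕ | ∃ u : List ℕ, IsFactor pf u ∧ u.length = n ∧
      p = (u.count 0, u.count 1)} = (fun v => (n - v, v)) '' V n := by
    ext p
    constructor
    · rintro ⟨u, ⟨i, hi1, hu⟩, hlen, rfl⟩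
      obtain ⟨h1, h0, _⟩ := factorAt_counts i n
      rw [hlen] at hu
      refine ⟨cnt i n, ⟨i - 1, by rw [show i - 1 + 1 = i by omega]⟩, ?_⟩
      rw [hu, h1, h0]
    · rintro ⟨v, ⟨i, rfl⟩, rfl⟩
      refine ⟨factorAt pf (i + 1) n, ⟨i + 1, by omega, ?_⟩, ?_, ?_⟩
      · congr 1
        simp [factorAt]
      · simp [factorAt]
      · obtain ⟨h1, h0, _⟩ := factorAt_counts (i + 1) n
        rw [h1, h0]
  have hinj : Function.Injective (fun v : ℕ => ((n - v, v) : ℕ × ℕ)) := by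
    intro a b h
    simpa using congrArg Prod.snd h
  rw [rho, hset, Set.ncard_image_of_injective _ hinj, V_eq_Icc,
    show Set.Icc (aa n) (bb n) = ((Finset.Icc (aa n) (bb n) : Finset ℕ) : Set ℕ) by
      rw [Finset.coe_Icc],
    Set.ncard_coe_finset, Nat.card_Icc]

end PFAux

/-- For the paperfolding word, `ρ(n+1) = ρ(n) ± 1` for every `n ≥ 1`. -/
theorem paperfolding_abelian_complexity_step (n : ℕ) (hn : 1 ≤ n) :
    rho pf (n + 1) = rho pf n + 1 ∨ rho pf (n + 1) + 1 = rho pf n := by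
  have h1 := PFAux.rho_eq n
  have h2 := PFAux.rho_eq (n + 1)
  have h3 := PFAux.aa_add_bb n
  have h4 := PFAux.aa_add_bb (n + 1)
  have h5 := PFAux.bb_step n
  have h6 := PFAux.aa_le_bb n
  have h7 := PFAux.aa_le_bb (n + 1)
  omega
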